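/- Let N ≥ 2. (a) For 0 ≤ j ≤ N−1 let x = (w, λ) with w := s₁s₂⋯s_j ∈ S_N (so w is the cycle mapping a ↦ a+1 for a ≤ j and j+1 ↦ 1; w = id if j = 0) and λ := e_{j+1} ∈ ℤ^N. Then the set of length positive elements for x is LP(x) = { v ∈ S_N : v⁻¹(m) > v⁻¹(j+1) for all m > j+1 }. (b) For 1 ≤ j ≤ N let x = (w, λ) with w := s_{N−1}s_{N−2}⋯s_j ∈ S_N (so w maps j ↦ N and t ↦ t−1 for j < t ≤ N; w = id if j = N) and λ := (1,…,1) − e_j ∈ ℤ^N. Then LP(x) = { v ∈ S_N : v⁻¹(m) < v⁻¹(j) for all m < j }. -/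

import Mathlib

/-- The simple transposition of `Fin N` swapping the 0-indexed positions `i` and
`i+1` (the identity if `i + 1 ≥ N`). -/
def simpleT (N : ℕ) (i : ℕ) : Equiv.Perm (Fin N) :=
  if h : i + 1 < N then Equiv.swap ⟨i, by omega⟩ ⟨i + 1, h⟩ else 1

/-- The length functional of `x = (w, λ)`: the value `ℓ(x, e_a − e_b)`. -/
def ellF {N : ℕ} (w : Equiv.Perm (Fin N)) (lam : Fin N → ℤ) (a b : Fin N) : ℤ :=
  lam a - lam b +
    (if a < b ∧ w b < w a then 1 else if b < a ∧ w a < w b then -1 else 0)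

/-- The set of length positive elements for `x = (w, λ)`. -/
def LP {N : ℕ} (w : Equiv.Perm (Fin N)) (lam : Fin N → ℤ) : Set (Equiv.Perm (Fin N)) :=
  {v | ∀ a b : Fin N, a < b → 0 ≤ ellF w lam (v a) (v b)}

lemma wA_apply (N : ℕ) : ∀ j, j < N → ∀ a : Fin N,
    ((((List.range j).map (simpleT N)).prod) a : ℕ) =
      if (a : ℕ) < j then (a : ℕ) + 1 else if (a : ℕ) = j then 0 else (a : ℕ) := by
  intro j
  induction j with
  | zero =>
    intro _ a
    simp only [List.range_zero, List.map_nil, List.prod_nil, Equiv.Perm.one_apply]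
    split_ifs <;> omega
  | succ i ih =>
    intro hj a
    have hi : i < N := by omega
    have ha := a.isLt
    rw [List.range_succ, List.map_append, List.prod_append]
    simp only [List.map_cons, List.map_nil, List.prod_cons, List.prod_nil, mul_one]
    rw [Equiv.Perm.mul_apply]
    rw [show simpleT N i = Equiv.swap ⟨i, hi⟩ ⟨i + 1, hj⟩ from by rw [simpleT, dif_pos hj]]
    by_cases h1 : (a : ℕ) = i
    · rw [show a = (⟨i, hi⟩ : Fin N) from Fin.ext h1, Equiv.swap_apply_left, ih hi]
      simp only [Fin.val_mk]
      split_ifs <;> omega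
    · by_cases h2 : (a : ℕ) = i + 1
      · rw [show a = (⟨i + 1, hj⟩ : Fin N) from Fin.ext h2, Equiv.swap_apply_right, ih hi]
        simp only [Fin.val_mk]
        split_ifs <;> omega
      · rw [Equiv.swap_apply_of_ne_of_ne (by simp [Fin.ext_iff]; omega)
          (by simp [Fin.ext_iff]; omega), ih hi a]
        split_ifs <;> omega

lemma wB_apply (N : ℕ) : ∀ c, c ≤ N - 1 → ∀ a : Fin N,
    ((((List.range c).map fun u => simpleT N (N - 2 - u)).prod) a : ℕ) =
      if (a : ℕ) < N - 1 - c then (a : ℕ)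
      else if (a : ℕ) = N - 1 - c then N - 1 else (a : ℕ) - 1 := by
  intro c
  induction c with
  | zero =>
    intro _ a
    have ha := a.isLt
    simp only [List.range_zero, List.map_nil, List.prod_nil, Equiv.Perm.one_apply]
    split_ifs <;> omega
  | succ c ih =>
    intro hc a
    have hN2 : 2 ≤ N := by omega
    have hcc : c ≤ N - 2 := by omega
    have ha := a.isLt
    have hlt : N - 2 - c + 1 < N := by omega
    have hlt' : N - 2 - c < N := by omega
    rw [List.range_succ, List.map_append, List.prod_append]
    simp only [List.map_cons, List.map_nil, List.prod_cons, List.prod_nil, mul_one]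
    rw [Equiv.Perm.mul_apply]
    rw [show simpleT N (N - 2 - c) = Equiv.swap ⟨N - 2 - c, hlt'⟩ ⟨N - 2 - c + 1, hlt⟩ from by
      rw [simpleT, dif_pos hlt]]
    by_cases h1 : (a : ℕ) = N - 2 - c
    · rw [show a = (⟨N - 2 - c, hlt'⟩ : Fin N) from Fin.ext h1, Equiv.swap_apply_left,
        ih (by omega)]
      simp only [Fin.val_mk]
      split_ifs <;> omega
    · by_cases h2 : (a : ℕ) = N - 2 - c + 1
      · rw [show a = (⟨N - 2 - c + 1, hlt⟩ : Fin N) from Fin.ext h2, Equiv.swap_apply_right,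
          ih (by omega)]
        simp only [Fin.val_mk]
        split_ifs <;> omega
      · rw [Equiv.swap_apply_of_ne_of_ne (by simp [Fin.ext_iff]; omega)
          (by simp [Fin.ext_iff]; omega), ih (by omega) a]
        split_ifs <;> omega

theorem stmt9 (N : ℕ) (hN : 2 ≤ N) :
    (∀ j : ℕ, ∀ _hj : j ≤ N - 1,
      LP (((List.range j).map (simpleT N)).prod)
          (fun a : Fin N => if (a : ℕ) = j then 1 else 0) =
        {v : Equiv.Perm (Fin N) | ∀ m : Fin N, j < (m : ℕ) →
          (v⁻¹ ⟨j, by omega⟩ : Fin N) < v⁻¹ m}) ∧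
    (∀ j : ℕ, ∀ _hj1 : 1 ≤ j, ∀ _hj2 : j ≤ N,
      LP (((List.range (N - j)).map fun u => simpleT N (N - 2 - u)).prod)
          (fun a : Fin N => if (a : ℕ) = j - 1 then 0 else 1) =
        {v : Equiv.Perm (Fin N) | ∀ m : Fin N, (m : ℕ) < j - 1 →
          v⁻¹ m < (v⁻¹ ⟨j - 1, by omega⟩ : Fin N)}) := by
  constructor
  · intro j hj
    have hjN : j < N := by omega
    ext v
    simp only [LP, Set.mem_setOf_eq]
    constructor
    · intro hv m hm
      rcases lt_trichotomy (v⁻¹ (⟨j, hjN⟩ : Fin N)) (v⁻¹ m) with h | h | h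
      · exact h
      · exfalso
        have := congrArg Fin.val ((Equiv.injective _) h)
        simp only [Fin.val_mk] at this
        omega
      · exfalso
        have H := hv _ _ h
        simp only [Equiv.Perm.inv_def, Equiv.apply_symm_apply] at H
        have hm' := m.isLt
        have hwa := wA_apply N j hjN m
        have hwb := wA_apply N j hjN ⟨j, hjN⟩
        simp only [ellF, Fin.lt_def, Fin.val_mk] at H hwa hwb
        split_ifs at hwa hwb H <;> omega
    · intro hv p q hpq
      have hp := (v p).isLt
      have hq := (v q).isLt
      have hne : ((v p) : ℕ) ≠ ((v q) : ℕ) := fun h => hpq.ne (v.injective (Fin.ext h))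
      have hkey : ¬(j < ((v p) : ℕ) ∧ ((v q) : ℕ) = j) := by
        rintro ⟨h1, h2⟩
        have H := hv (v p) h1
        have e : (⟨j, hjN⟩ : Fin N) = v q := Fin.ext h2.symm
        rw [e] at H
        simp only [Equiv.Perm.inv_def, Equiv.symm_apply_apply] at H
        exact absurd hpq H.asymm
      have hwa := wA_apply N j hjN (v p)
      have hwb := wA_apply N j hjN (v q)
      simp only [ellF, Fin.lt_def] at hwa hwb ⊢
      split_ifs at hwa hwb ⊢ <;> omega
  · intro j hj1 hj2
    have hkN : j - 1 < N := by omega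
    have hc : N - j ≤ N - 1 := by omega
    ext v
    simp only [LP, Set.mem_setOf_eq]
    constructor
    · intro hv m hm
      rcases lt_trichotomy (v⁻¹ m) (v⁻¹ (⟨j - 1, hkN⟩ : Fin N)) with h | h | h
      · exact h
      · exfalso
        have := congrArg Fin.val ((Equiv.injective _) h)
        simp only [Fin.val_mk] at this
        omega
      · exfalso
        have H := hv _ _ h
        simp only [Equiv.Perm.inv_def, Equiv.apply_symm_apply] at H
        have hm' := m.isLt
        have hwa := wB_apply N (N - j) hc ⟨j - 1, hkN⟩
        have hwb := wB_apply N (N - j) hc m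
        simp only [ellF, Fin.lt_def, Fin.val_mk] at H hwa hwb
        split_ifs at hwa hwb H <;> omega
    · intro hv p q hpq
      have hp := (v p).isLt
      have hq := (v q).isLt
      have hne : ((v p) : ℕ) ≠ ((v q) : ℕ) := fun h => hpq.ne (v.injective (Fin.ext h))
      have hkey : ¬(((v p) : ℕ) = j - 1 ∧ ((v q) : ℕ) < j - 1) := by
        rintro ⟨h1, h2⟩
        have H := hv (v q) h2
        have e : (⟨j - 1, hkN⟩ : Fin N) = v p := Fin.ext h1.symm
        rw [e] at H
        simp only [Equiv.Perm.inv_def, Equiv.symm_apply_apply] at H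
        exact absurd hpq H.asymm
      have hwa := wB_apply N (N - j) hc (v p)
      have hwb := wB_apply N (N - j) hc (v q)
      simp only [ellF, Fin.lt_def] at hwa hwb ⊢
      split_ifs at hwa hwb ⊢ <;> omega
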